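/- Let K be a field, R = K[x_1,…,x_n,x_{n+1}], and let I ⊆ R be a monomial ideal none of whose minimal monomial generators is divisible by x_{n+1}. Let 𝔮 = (x_1,…,x_n), assume I ≠ 𝔮, and set L = I + x_{n+1}𝔮. Suppose (I^t :_R v) = 𝔮 for some integer t ≥ 1 and some monomial v ∈ R, and suppose that whenever 1 ≤ λ ≤ n and x_λ v = f_1 ⋯ f_t M with f_1,…,f_t minimal monomial generators of I and M a monomial of R, there exists 1 ≤ j ≤ t such that x_λ divides M f_j and M f_j / x_λ ≠ 1. Then 𝔪 = (x_1,…,x_{n+1}) ∈ Ass(R/L^t). -/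

import Mathlib

open MvPolynomial Pointwise

namespace Stmt7Aux

variable {K : Type*} [Field K] {σ : Type*}

/-- iterated sumset -/
def T (S : Set (σ →₀ ℕ)) : ℕ → Set (σ →₀ ℕ)
  | 0 => {0}
  | k+1 => Set.image2 (· + ·) S (T S k)

lemma span_mono_mul (S₁ S₂ : Set (σ →₀ ℕ)) :
    Ideal.span ((fun d => monomial d (1:K)) '' S₁) * Ideal.span ((fun d => monomial d (1:K)) '' S₂)
      = Ideal.span ((fun d => monomial d (1:K)) '' Set.image2 (· + ·) S₁ S₂) := by
  rw [Ideal.span_mul_span']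
  congr 1
  ext p
  simp only [Set.mem_mul, Set.mem_image, Set.mem_image2]
  constructor
  · rintro ⟨_, ⟨a, ha, rfl⟩, _, ⟨b, hb, rfl⟩, rfl⟩
    exact ⟨a + b, ⟨a, ha, b, hb, rfl⟩, by simp [monomial_mul]⟩
  · rintro ⟨_, ⟨a, ha, b, hb, rfl⟩, rfl⟩
    exact ⟨monomial a 1, ⟨a, ha, rfl⟩, monomial b 1, ⟨b, hb, rfl⟩, by simp [monomial_mul]⟩

lemma span_mono_pow (S : Set (σ →₀ ℕ)) (k : ℕ) :
    Ideal.span ((fun d => monomial d (1:K)) '' S) ^ k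
      = Ideal.span ((fun d => monomial d (1:K)) '' T S k) := by
  induction k with
  | zero => simp [T, Ideal.one_eq_top, Ideal.span_singleton_one]
  | succ k ih =>
      rw [pow_succ, ih, mul_comm, span_mono_mul]
      rfl

lemma mono_mem_span {S : Set (σ →₀ ℕ)} {b : σ →₀ ℕ} :
    monomial b (1:K) ∈ Ideal.span ((fun d => monomial d (1:K)) '' S) ↔ ∃ d ∈ S, d ≤ b := by
  classical
  rw [mem_ideal_span_monomial_image]
  constructor
  · intro h
    exact h b (by simp [mem_support_iff, coeff_monomial])
  · rintro ⟨d, hd, hdb⟩ xi hxi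
    rw [mem_support_iff, coeff_monomial] at hxi
    rcases eq_or_ne b xi with rfl | hne
    · exact ⟨d, hd, hdb⟩
    · simp [if_neg hne] at hxi

lemma mem_T_iff {S : Set (σ →₀ ℕ)} {k : ℕ} {d : σ →₀ ℕ} :
    d ∈ T S k ↔ ∃ c : Fin k → (σ →₀ ℕ), (∀ i, c i ∈ S) ∧ ∑ i, c i = d := by
  induction k generalizing d with
  | zero => simp [T, eq_comm]
  | succ k ih =>
      constructor
      · rintro ⟨a, ha, d', hd', rfl⟩
        obtain ⟨c, hc, rfl⟩ := ih.mp hd'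
        exact ⟨Fin.cons a c, fun i => Fin.cases ha hc i, by rw [Fin.sum_cons]⟩
      · rintro ⟨c, hc, rfl⟩
        refine ⟨c 0, hc 0, ∑ i : Fin k, c i.succ,
          ih.mpr ⟨fun i => c i.succ, fun i => hc _, rfl⟩, ?_⟩
        rw [Fin.sum_univ_succ]

lemma T_apply_zero {S : Set (σ →₀ ℕ)} {a : σ} (hS : ∀ d ∈ S, d a = 0) :
    ∀ k, ∀ d ∈ T S k, d a = 0 := by
  intro k
  induction k with
  | zero => intro d hd; rw [Set.mem_singleton_iff.mp hd]; rfl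
  | succ k ih =>
      rintro _ ⟨b, hb, d', hd', rfl⟩
      simp [hS b hb, ih d' hd']

lemma mem_T_of_union {S Y : Set (σ →₀ ℕ)} {a : σ} (hY : ∀ y ∈ Y, y a ≠ 0) :
    ∀ k, ∀ d ∈ T (S ∪ Y) k, d a = 0 → d ∈ T S k := by
  intro k
  induction k with
  | zero => intro d hd _; exact hd
  | succ k ih =>
      rintro _ ⟨b, hb, d', hd', rfl⟩ hzero
      have hb0 : b a = 0 := by
        have := Finsupp.add_apply b d' a ▸ hzero
        omega
      rcases hb with hb | hb
      · exact ⟨b, hb, d', ih d' hd' (by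
          have := Finsupp.add_apply b d' a ▸ hzero; omega), rfl⟩
      · exact absurd hb0 (hY b hb)

lemma minimalize (I : Ideal (MvPolynomial σ K)) [Fintype σ] {b : σ →₀ ℕ}
    (hb : monomial b (1:K) ∈ I) :
    ∃ e : σ →₀ ℕ, e ≤ b ∧ monomial e (1:K) ∈ I ∧
      ∀ e' : σ →₀ ℕ, monomial e' (1:K) ∈ I → e' ≤ e → e' = e := by
  generalize hdeg : (∑ i, b i) = D
  induction D using Nat.strong_induction_on generalizing b with
  | _ D ih =>
    by_cases hmin : ∀ e' : σ →₀ ℕ, monomial e' (1:K) ∈ I → e' ≤ b → e' = b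
    · exact ⟨b, le_refl b, hb, hmin⟩
    · push_neg at hmin
      obtain ⟨e', he'I, he'le, he'ne⟩ := hmin
      have hlt : ∑ i, e' i < ∑ i, b i := by
        obtain ⟨j, hj⟩ : ∃ j, e' j ≠ b j := by
          by_contra h
          push_neg at h
          exact he'ne (Finsupp.ext h)
        exact Finset.sum_lt_sum (fun i _ => he'le i)
          ⟨j, Finset.mem_univ j, lt_of_le_of_ne (he'le j) hj⟩
      obtain ⟨e, h1, h2, h3⟩ := ih (∑ i, e' i) (hdeg ▸ hlt) he'I rfl
      exact ⟨e, le_trans h1 he'le, h2, h3⟩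

lemma prod_monomial {ι : Type*} (s : Finset ι) (e : ι → (σ →₀ ℕ)) :
    (∏ i ∈ s, (monomial (e i) (1:K))) = monomial (∑ i ∈ s, e i) 1 := by
  classical
  induction s using Finset.induction_on with
  | empty => simp
  | @insert a s' hx ih => rw [Finset.prod_insert hx, Finset.sum_insert hx, ih, monomial_mul, one_mul]

lemma prod_mem_pow {ι : Type*} (L : Ideal (MvPolynomial σ K)) (s : Finset ι)
    (f : ι → MvPolynomial σ K)
    (h : ∀ i ∈ s, f i ∈ L) : (∏ i ∈ s, f i) ∈ L ^ s.card := by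
  classical
  induction s using Finset.induction_on with
  | empty => simp [Ideal.one_eq_top]
  | @insert a s' hx ih =>
      rw [Finset.prod_insert hx, Finset.card_insert_of_notMem hx, pow_succ,
        mul_comm (L ^ s'.card) L]
      exact Ideal.mul_mem_mul (h a (Finset.mem_insert_self a s'))
        (ih fun i hi => h i (Finset.mem_insert_of_mem hi))

lemma erase_eq_self {a : σ} {f : σ →₀ ℕ} (h : f a = 0) : f.erase a = f := by
  ext b
  rcases eq_or_ne b a with rfl | hne
  · rw [Finsupp.erase_same, h]
  · rw [Finsupp.erase_ne hne]

end Stmt7Aux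


open Stmt7Aux in
theorem stmt_7 {K : Type*} [Field K] {n : ℕ}
    (I : Ideal (MvPolynomial (Fin (n + 1)) K))
    -- `I` is a monomial ideal none of whose generators is divisible by `x_{n+1}`:
    (hI : ∃ S : Set (Fin (n + 1) →₀ ℕ), (∀ d ∈ S, d (Fin.last n) = 0) ∧
      I = Ideal.span ((fun d => (monomial d (1 : K))) '' S))
    -- `𝔮 = (x_1, …, x_n)` and `I ≠ 𝔮`:
    (q : Ideal (MvPolynomial (Fin (n + 1)) K))
    (hq : q = Ideal.span (Set.range fun i : Fin n =>
      (X (Fin.castSucc i) : MvPolynomial (Fin (n + 1)) K)))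
    (hIq : I ≠ q)
    (L : Ideal (MvPolynomial (Fin (n + 1)) K))
    (hL : L = I + Ideal.span {X (Fin.last n)} * q)
    (t : ℕ) (ht : 1 ≤ t)
    -- `(I^t : v) = 𝔮` for the monomial `v = monomial w 1`:
    (w : Fin (n + 1) →₀ ℕ)
    (hcolon : (I ^ t).colon (Ideal.span {monomial w (1 : K)}) = q)
    -- whenever `x_λ v = f_1 ⋯ f_t M` with each `f_j` a minimal monomial generator of `I`
    -- and `M` a monomial, some `M f_j / x_λ` is defined and is not `1`:
    (hfact : ∀ (lam : Fin n) (e : Fin t → (Fin (n + 1) →₀ ℕ)) (Me : Fin (n + 1) →₀ ℕ),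
      (∀ j : Fin t, monomial (e j) (1 : K) ∈ I ∧
        ∀ e' : Fin (n + 1) →₀ ℕ, monomial e' (1 : K) ∈ I → e' ≤ e j → e' = e j) →
      Finsupp.single (Fin.castSucc lam) 1 + w = (∑ j : Fin t, e j) + Me →
      ∃ j : Fin t, 1 ≤ (Me + e j) (Fin.castSucc lam) ∧
        Me + e j ≠ Finsupp.single (Fin.castSucc lam) 1) :
    Ideal.span (Set.range (X : Fin (n + 1) → MvPolynomial (Fin (n + 1)) K)) ∈
      associatedPrimes (MvPolynomial (Fin (n + 1)) K)
        ((MvPolynomial (Fin (n + 1)) K) ⧸ L ^ t) := by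
  classical
  obtain ⟨S, hS0, hIS⟩ := hI
  have hXmono : ∀ j : Fin (n+1),
      (X j : MvPolynomial (Fin (n+1)) K) = monomial (Finsupp.single j 1) 1 := fun j => rfl
  -- 1 ∉ q
  have hone_q : (1 : MvPolynomial (Fin (n+1)) K) ∉ q := by
    intro h1
    have hle : q ≤ RingHom.ker (constantCoeff : MvPolynomial (Fin (n+1)) K →+* K) := by
      rw [hq, Ideal.span_le]
      rintro _ ⟨i, rfl⟩
      simp [RingHom.mem_ker]
    have h2 := hle h1
    rw [RingHom.mem_ker, map_one] at h2
    exact one_ne_zero h2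
  -- v ∉ I^t
  have hvnot : monomial w (1:K) ∉ I ^ t := by
    intro hv
    apply hone_q
    rw [← hcolon]
    exact Ideal.mem_colon_span_singleton.mpr (by rwa [one_mul])
  have h0S : (0 : Fin (n+1) →₀ ℕ) ∉ S := by
    intro h0
    apply hvnot
    have h1I : (1 : MvPolynomial (Fin (n+1)) K) ∈ I := by
      rw [hIS]
      have h2 : monomial (0 : Fin (n+1) →₀ ℕ) (1:K)
          ∈ Ideal.span ((fun d => (monomial d (1 : K))) '' S) := Ideal.subset_span ⟨0, h0, rfl⟩
      simpa using h2
    have h1t : (1 : MvPolynomial (Fin (n+1)) K) ∈ I ^ t := by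
      simpa using Ideal.pow_mem_pow h1I t
    simpa using Ideal.mul_mem_left _ (monomial w (1:K)) h1t
  -- I ≤ q
  have hIleq : I ≤ q := by
    rw [hIS, Ideal.span_le]
    rintro _ ⟨d, hd, rfl⟩
    obtain ⟨i0, hi0⟩ : ∃ i, d i ≠ 0 := by
      by_contra hh; push_neg at hh
      have hd0 : d = 0 := by ext a; simpa using hh a
      exact h0S (hd0 ▸ hd)
    have hi0last : i0 ≠ Fin.last n := fun h => hi0 (by rw [h]; exact hS0 d hd)
    obtain ⟨i, rfl⟩ := Fin.exists_castSucc_eq.mpr hi0last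
    have hsle : Finsupp.single (Fin.castSucc i) 1 ≤ d :=
      Finsupp.single_le_iff.mpr (Nat.one_le_iff_ne_zero.mpr hi0)
    have hdm : monomial d (1:K)
        = X (Fin.castSucc i) * monomial (d - Finsupp.single (Fin.castSucc i) 1) 1 := by
      rw [hXmono, monomial_mul, one_mul, add_tsub_cancel_of_le hsle]
    show monomial d (1:K) ∈ (q : Set (MvPolynomial (Fin (n+1)) K))
    rw [SetLike.mem_coe, hdm, hq]
    exact Ideal.mul_mem_right _ _ (Ideal.subset_span ⟨i, rfl⟩)
  -- some variable not in I
  obtain ⟨lam0, hlam0⟩ : ∃ i : Fin n,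
      (X (Fin.castSucc i) : MvPolynomial (Fin (n+1)) K) ∉ I := by
    by_contra hh; push_neg at hh
    refine hIq (le_antisymm hIleq ?_)
    rw [hq, Ideal.span_le]
    rintro _ ⟨i, rfl⟩
    exact hh i
  -- colon facts
  have hwmem : ∀ i : Fin n,
      monomial (Finsupp.single (Fin.castSucc i) 1 + w) (1:K) ∈ I ^ t := by
    intro i
    have hXi : (X (Fin.castSucc i) : MvPolynomial (Fin (n+1)) K)
        ∈ (I^t).colon (Ideal.span {monomial w (1:K)}) := by
      rw [hcolon, hq]; exact Ideal.subset_span ⟨i, rfl⟩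
    have h2 := Ideal.mem_colon_span_singleton.mp hXi
    rwa [hXmono, monomial_mul, one_mul] at h2
  -- I^t as monomial ideal
  have hItT : I ^ t = Ideal.span ((fun d => monomial d (1:K)) '' T S t) := by
    rw [hIS, span_mono_pow]
  -- extract factorization of x_{lam0} * v
  have hmain := hwmem lam0
  rw [hItT] at hmain
  obtain ⟨d, hdT, hdle⟩ := mono_mem_span.mp hmain
  obtain ⟨c, hcS, hcsum⟩ := mem_T_iff.mp hdT
  have hcI : ∀ i : Fin t, monomial (c i) (1:K) ∈ I := fun i => by
    rw [hIS]; exact Ideal.subset_span ⟨c i, hcS i, rfl⟩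
  choose e helec heI hemin using fun i => minimalize I (hcI i)
  have hesum_le : (∑ i, e i) ≤ Finsupp.single (Fin.castSucc lam0) 1 + w := by
    calc (∑ i, e i) ≤ ∑ i, c i := Finset.sum_le_sum fun i _ => helec i
    _ = d := hcsum
    _ ≤ _ := hdle
  set Me := Finsupp.single (Fin.castSucc lam0) 1 + w - ∑ i, e i with hMe
  have hkey : Finsupp.single (Fin.castSucc lam0) 1 + w = (∑ i, e i) + Me :=
    (add_tsub_cancel_of_le hesum_le).symm
  obtain ⟨j, hj1, _⟩ := hfact lam0 e Me (fun i => ⟨heI i, hemin i⟩) hkey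
  -- basic facts about the minimal generators
  have helast : ∀ i : Fin t, e i (Fin.last n) = 0 := by
    intro i
    have h1 := Finsupp.le_def.mp (helec i) (Fin.last n)
    have hc0 : c i (Fin.last n) = 0 := hS0 (c i) (hcS i)
    omega
  have hene : ∀ i : Fin t, e i ≠ 0 := by
    intro i h0
    have h1 : monomial (e i) (1:K) ∈ Ideal.span ((fun d => monomial d (1:K)) '' S) := by
      rw [← hIS]; exact heI i
    obtain ⟨d', hd', hd'le⟩ := mono_mem_span.mp h1
    apply h0S
    have hd'0 : d' = 0 := le_antisymm (h0 ▸ hd'le) zero_le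
    rwa [← hd'0]
  -- the leftover exponent P
  set P := Me + e j - Finsupp.single (Fin.castSucc lam0) 1 with hP
  have hsingle_le : Finsupp.single (Fin.castSucc lam0) 1 ≤ Me + e j :=
    Finsupp.single_le_iff.mpr hj1
  have hPsplit : Finsupp.single (Fin.castSucc lam0) 1 + P = Me + e j :=
    add_tsub_cancel_of_le hsingle_le
  have hsum_erase : (∑ i ∈ Finset.univ.erase j, e i) + e j = ∑ i, e i :=
    Finset.sum_erase_add _ _ (Finset.mem_univ j)
  have hw : w = (∑ i ∈ Finset.univ.erase j, e i) + P := by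
    ext a
    have k1 := DFunLike.congr_fun hkey a
    have k2 := DFunLike.congr_fun hPsplit a
    have k3 := DFunLike.congr_fun hsum_erase a
    simp only [Finsupp.add_apply, Finsupp.coe_add, Pi.add_apply] at k1 k2 k3 ⊢
    omega
  set w' := w.erase (Fin.last n) with hw'def
  set N0 := P.erase (Fin.last n) with hN0def
  have hw'eq : w' = (∑ i ∈ Finset.univ.erase j, e i) + N0 := by
    rw [hw'def, hw, Finsupp.erase_add, hN0def]
    congr 1
    apply erase_eq_self
    have hsum0 : (∑ i ∈ Finset.univ.erase j, e i) (Fin.last n)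
        = ∑ i ∈ Finset.univ.erase j, (e i) (Fin.last n) :=
      map_sum (Finsupp.applyAddHom (Fin.last n)) _ _
    rw [hsum0]
    exact Finset.sum_eq_zero fun i _ => helast i
  have hN0ne : N0 ≠ 0 := by
    intro h0
    have hejle : e j ≤ Finsupp.single (Fin.castSucc lam0) 1 := by
      rw [Finsupp.le_def]
      intro a
      rcases eq_or_ne a (Fin.last n) with rfl | hne
      · simp [helast j]
      · have hP0 : P a = 0 := by
          have h2 : N0 a = 0 := by rw [h0]; rfl
          rw [hN0def, Finsupp.erase_ne hne] at h2
          exact h2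
        have k2 := DFunLike.congr_fun hPsplit a
        simp only [Finsupp.add_apply, Finsupp.coe_add, Pi.add_apply] at k2
        omega
    rcases Nat.eq_zero_or_pos (e j (Fin.castSucc lam0)) with hz | hpos
    · apply hene j; ext a
      have h1 := Finsupp.le_def.mp hejle a
      rcases eq_or_ne a (Fin.castSucc lam0) with rfl | hne
      · simpa using hz
      · rw [Finsupp.single_eq_of_ne' (Ne.symm hne)] at h1
        simpa using Nat.le_zero.mp h1
    · apply hlam0
      have hej : e j = Finsupp.single (Fin.castSucc lam0) 1 := by
        ext a
        have h1 := Finsupp.le_def.mp hejle a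
        rcases eq_or_ne a (Fin.castSucc lam0) with rfl | hne
        · rw [Finsupp.single_eq_same] at h1 ⊢; omega
        · rw [Finsupp.single_eq_of_ne' (Ne.symm hne)] at h1 ⊢; omega
      have h2 := heI j
      rw [hej] at h2
      exact h2
  obtain ⟨a0, ha0⟩ := Finsupp.ne_iff.mp hN0ne
  have ha0' : N0 a0 ≠ 0 := by simpa using ha0
  have ha0lst : a0 ≠ Fin.last n := by
    intro h
    apply ha0'
    rw [h, hN0def]
    exact Finsupp.erase_same
  obtain ⟨mu, hmu⟩ := Fin.exists_castSucc_eq.mpr ha0lst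
  have hmuN0 : 1 ≤ N0 (Fin.castSucc mu) := by
    rw [hmu]; exact Nat.one_le_iff_ne_zero.mpr ha0'
  set N0' := N0 - Finsupp.single (Fin.castSucc mu) 1 with hN0'def
  have hN0split : Finsupp.single (Fin.castSucc mu) 1 + N0' = N0 :=
    add_tsub_cancel_of_le (Finsupp.single_le_iff.mpr hmuN0)
  -- (A)
  have hA : ∀ i : Fin n, monomial (Finsupp.single (Fin.castSucc i) 1 + w') (1:K) ∈ I ^ t := by
    intro i
    have h1 := hwmem i
    rw [hItT] at h1 ⊢
    obtain ⟨d2, hd2T, hd2le⟩ := mono_mem_span.mp h1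
    refine mono_mem_span.mpr ⟨d2, hd2T, ?_⟩
    rw [Finsupp.le_def]
    intro a
    have h3 := Finsupp.le_def.mp hd2le a
    have hd2lst : d2 (Fin.last n) = 0 := T_apply_zero hS0 t d2 hd2T
    rcases eq_or_ne a (Fin.last n) with rfl | hne
    · omega
    · have hw'a : w' a = w a := by rw [hw'def]; exact Finsupp.erase_ne hne
      simp only [Finsupp.add_apply, Finsupp.coe_add, Pi.add_apply] at h3 ⊢
      omega
  -- (B)
  have hB : monomial (Finsupp.single (Fin.last n) 1 + w') (1:K) ∈ L ^ t := by
    have hexp : Finsupp.single (Fin.last n) 1 + w'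
        = (∑ i ∈ Finset.univ.erase j, e i)
          + (Finsupp.single (Fin.last n) 1 + (Finsupp.single (Fin.castSucc mu) 1 + N0')) := by
      rw [hN0split, hw'eq]
      abel
    have hfactored : monomial (Finsupp.single (Fin.last n) 1 + w') (1:K)
        = (∏ i ∈ Finset.univ.erase j, monomial (e i) (1:K)) *
          monomial (Finsupp.single (Fin.last n) 1
            + (Finsupp.single (Fin.castSucc mu) 1 + N0')) 1 := by
      rw [prod_monomial, monomial_mul, one_mul, hexp]
    rw [hfactored]
    have hcard : (Finset.univ.erase j).card = t - 1 := by
      rw [Finset.card_erase_of_mem (Finset.mem_univ j), Finset.card_univ, Fintype.card_fin]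
    have hmemL : ∀ i ∈ Finset.univ.erase j, monomial (e i) (1:K) ∈ L := by
      intro i _
      rw [hL, Submodule.add_eq_sup]
      exact Submodule.mem_sup_left (heI i)
    have hprod := prod_mem_pow L (Finset.univ.erase j) _ hmemL
    rw [hcard] at hprod
    have hg : monomial (Finsupp.single (Fin.last n) 1
        + (Finsupp.single (Fin.castSucc mu) 1 + N0')) (1:K) ∈ L := by
      have hgf : monomial (Finsupp.single (Fin.last n) 1
          + (Finsupp.single (Fin.castSucc mu) 1 + N0')) (1:K)
          = (X (Fin.last n) * X (Fin.castSucc mu)) * monomial N0' 1 := by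
        rw [hXmono, hXmono, monomial_mul, monomial_mul, one_mul, one_mul, add_assoc]
      rw [hgf, hL, Submodule.add_eq_sup]
      apply Submodule.mem_sup_right
      apply Ideal.mul_mem_right
      exact Ideal.mul_mem_mul (Ideal.mem_span_singleton_self _)
        (by rw [hq]; exact Ideal.subset_span ⟨mu, rfl⟩)
    have hfin := Ideal.mul_mem_mul hprod hg
    rwa [← pow_succ, Nat.sub_add_cancel ht] at hfin
  -- (C)
  have hqspan : q = Ideal.span ((fun d => monomial d (1:K)) ''
      Set.range (fun i : Fin n => Finsupp.single (Fin.castSucc i) (1:ℕ))) := by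
    rw [hq]
    congr 1
    rw [← Set.range_comp]
    rfl
  have hyspan : Ideal.span {(X (Fin.last n) : MvPolynomial (Fin (n+1)) K)} * q
      = Ideal.span ((fun d => monomial d (1:K)) ''
        Set.image2 (· + ·) {Finsupp.single (Fin.last n) (1:ℕ)}
          (Set.range (fun i : Fin n => Finsupp.single (Fin.castSucc i) (1:ℕ)))) := by
    rw [hqspan, show ({(X (Fin.last n) : MvPolynomial (Fin (n+1)) K)} : Set _)
      = (fun d => monomial d (1:K)) '' {Finsupp.single (Fin.last n) (1:ℕ)} from
        by rw [Set.image_singleton, hXmono]]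
    exact span_mono_mul _ _
  have hLspan : L = Ideal.span ((fun d => monomial d (1:K)) ''
      (S ∪ Set.image2 (· + ·) {Finsupp.single (Fin.last n) (1:ℕ)}
        (Set.range (fun i : Fin n => Finsupp.single (Fin.castSucc i) (1:ℕ))))) := by
    rw [hL, hIS, hyspan, Set.image_union, Ideal.span_union, Submodule.add_eq_sup]
  have hC : monomial w' (1:K) ∉ L ^ t := by
    intro hmem
    rw [hLspan, span_mono_pow] at hmem
    obtain ⟨d2, hd2T, hd2le⟩ := mono_mem_span.mp hmem
    have hYlst : ∀ y ∈ Set.image2 (· + ·) {Finsupp.single (Fin.last n) (1:ℕ)}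
        (Set.range (fun i : Fin n => Finsupp.single (Fin.castSucc i) (1:ℕ))),
        y (Fin.last n) ≠ 0 := by
      rintro _ ⟨a, ha, b, hb, rfl⟩
      rw [Set.mem_singleton_iff] at ha
      subst ha
      simp [Finsupp.add_apply, Finsupp.single_eq_same]
    have hw'lst : w' (Fin.last n) = 0 := by rw [hw'def]; exact Finsupp.erase_same
    have hd2lst : d2 (Fin.last n) = 0 := by
      have h3 := Finsupp.le_def.mp hd2le (Fin.last n)
      omega
    have hd2S : d2 ∈ T S t := mem_T_of_union hYlst t d2 hd2T hd2lst
    apply hvnot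
    rw [hItT]
    refine mono_mem_span.mpr ⟨d2, hd2S, le_trans hd2le ?_⟩
    rw [hw'def, Finsupp.le_def]
    intro a
    rcases eq_or_ne a (Fin.last n) with rfl | hne
    · simp [Finsupp.erase_same]
    · rw [Finsupp.erase_ne hne]
  -- the maximal ideal
  have hMMker : Ideal.span (Set.range (X : Fin (n+1) → MvPolynomial (Fin (n+1)) K))
      = RingHom.ker (constantCoeff : MvPolynomial (Fin (n+1)) K →+* K) := by
    apply le_antisymm
    · rw [Ideal.span_le]
      rintro _ ⟨i, rfl⟩
      simp [RingHom.mem_ker]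
    · intro p hp
      rw [show Set.range (X : Fin (n+1) → MvPolynomial (Fin (n+1)) K)
        = X '' Set.univ from (Set.image_univ).symm, mem_ideal_span_X_image]
      intro mm hmm
      by_contra hcon
      push_neg at hcon
      have hmm0 : mm = 0 := Finsupp.ext fun a => hcon a (Set.mem_univ a)
      rw [RingHom.mem_ker, constantCoeff_eq] at hp
      rw [mem_support_iff, hmm0] at hmm
      exact hmm hp
  have hMMmax : (Ideal.span (Set.range (X : Fin (n+1) → MvPolynomial (Fin (n+1)) K))).IsMaximal := by
    rw [hMMker]
    exact RingHom.ker_isMaximal_of_surjective _ (fun k => ⟨C k, by simp⟩)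
  -- the associated prime witness
  set u := monomial w' (1:K) with hu
  set ubar := Ideal.Quotient.mk (L ^ t) u with hubar
  have hsmul : ∀ r : MvPolynomial (Fin (n+1)) K,
      r • ubar = Ideal.Quotient.mk (L ^ t) (r * u) := fun r => rfl
  have hXu : ∀ jj : Fin (n+1), (X jj : MvPolynomial (Fin (n+1)) K) * u
      = monomial (Finsupp.single jj 1 + w') 1 := fun jj => by
    rw [hu, hXmono, monomial_mul, one_mul]
  have hannle : Ideal.span (Set.range (X : Fin (n+1) → MvPolynomial (Fin (n+1)) K))
      ≤ (Submodule.span (MvPolynomial (Fin (n+1)) K) {ubar}).annihilator := by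
    rw [Ideal.span_le]
    rintro _ ⟨i, rfl⟩
    rw [SetLike.mem_coe, Submodule.mem_annihilator_span_singleton, hsmul,
      Ideal.Quotient.eq_zero_iff_mem, hXu]
    refine Fin.lastCases ?_ ?_ i
    · exact hB
    · intro i'
      have hIL : I ^ t ≤ L ^ t :=
        Ideal.pow_right_mono (by rw [hL, Submodule.add_eq_sup]; exact le_sup_left) t
      exact hIL (hA i')
  have hann_ne_top :
      (Submodule.span (MvPolynomial (Fin (n+1)) K) {ubar}).annihilator ≠ ⊤ := by
    intro htop
    have h1 : (1 : MvPolynomial (Fin (n+1)) K)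
        ∈ (Submodule.span (MvPolynomial (Fin (n+1)) K) {ubar}).annihilator := by
      rw [htop]; exact Submodule.mem_top
    rw [Submodule.mem_annihilator_span_singleton, hsmul,
      Ideal.Quotient.eq_zero_iff_mem, one_mul] at h1
    exact hC h1
  have heq : (⊥ : Submodule (MvPolynomial (Fin (n+1)) K) _).colon {ubar}
      = (Submodule.span (MvPolynomial (Fin (n+1)) K) {ubar}).annihilator := by
    ext r
    rw [Submodule.mem_colon_singleton, Submodule.mem_bot,
      Submodule.mem_annihilator_span_singleton]
  refine isAssociatedPrime_iff.mpr ⟨hMMmax.isPrime, ubar, ?_⟩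
  rw [heq]
  exact hMMmax.eq_of_le hann_ne_top hannle
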